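/- Let V be a real vector space, I₁, I₂ complex structures on V ⊕ V* (i.e. squaring to -Id) with I₁I₂ + I₂I₁ = 2p·Id, |p| < 1, and suppose both are compatible with the canonical split pairing ⟨X+ξ, Y+η⟩ = ½(ξ(Y)+η(X)) (i.e. ⟨Iᵢv, Iᵢw⟩ = ⟨v,w⟩ for all v,w). Then K := (1/(2√(1-p²)))·(I₁I₂ - I₂I₁) is also compatible with the pairing: ⟨Kv, Kw⟩ = ⟨v,w⟩ for all v, w. -/
import Mathlib


/-- If `I₁, I₂` are complex structures on `V ⊕ V*` compatible with the
canonical split pairing `⟨(X,ξ),(Y,η)⟩ = ½(ξ(Y)+η(X))` and `I₁I₂ + I₂I₁ = 2p·Id` with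
`|p| < 1`, then `K = (1/(2√(1-p²)))(I₁I₂ - I₂I₁)` is also compatible with the pairing. -/
theorem stmt1 {V : Type*} [AddCommGroup V] [Module ℝ V] [FiniteDimensional ℝ V]
    (pair : V × Module.Dual ℝ V → V × Module.Dual ℝ V → ℝ)
    (hpair : ∀ v w : V × Module.Dual ℝ V, pair v w = (v.2 w.1 + w.2 v.1) / 2)
    (I₁ I₂ : Module.End ℝ (V × Module.Dual ℝ V))
    (h1 : I₁ * I₁ = -1) (h2 : I₂ * I₂ = -1)
    (hcomp1 : ∀ v w, pair (I₁ v) (I₁ w) = pair v w)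
    (hcomp2 : ∀ v w, pair (I₂ v) (I₂ w) = pair v w)
    (p : ℝ) (hp : |p| < 1)
    (hac : I₁ * I₂ + I₂ * I₁
      = (2 * p) • (1 : Module.End ℝ (V × Module.Dual ℝ V)))
    (K : Module.End ℝ (V × Module.Dual ℝ V))
    (hK : K = (1 / (2 * Real.sqrt (1 - p ^ 2))) • (I₁ * I₂ - I₂ * I₁)) :
    ∀ v w, pair (K v) (K w) = pair v w := by
  intro v w
  have psub_r : ∀ a b c, pair a (b - c) = pair a b - pair a c := by
    intro a b c; simp [hpair]; ring
  have padd_r : ∀ a b c, pair a (b + c) = pair a b + pair a c := by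
    intro a b c; simp [hpair]; ring
  have pneg_r : ∀ a b, pair a (-b) = - pair a b := by
    intro a b; simp [hpair]; ring
  have psmul_l : ∀ (r : ℝ) a b, pair (r • a) b = r * pair a b := by
    intro r a b; simp [hpair]; ring
  have psmul_r : ∀ (r : ℝ) a b, pair a (r • b) = r * pair a b := by
    intro r a b; simp [hpair]; ring
  have hI1sq : ∀ x, I₁ (I₁ x) = -x := by
    intro x
    have := LinearMap.ext_iff.mp h1 x
    simpa [Module.End.mul_apply] using this
  have hI2sq : ∀ x, I₂ (I₂ x) = -x := by
    intro x
    have := LinearMap.ext_iff.mp h2 x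
    simpa [Module.End.mul_apply] using this
  have hadj1 : ∀ a b, pair (I₁ a) b = - pair a (I₁ b) := by
    intro a b
    have h := hcomp1 a (I₁ b)
    rw [hI1sq, pneg_r] at h
    linarith
  have hadj2 : ∀ a b, pair (I₂ a) b = - pair a (I₂ b) := by
    intro a b
    have h := hcomp2 a (I₂ b)
    rw [hI2sq, pneg_r] at h
    linarith
  set A := I₁ * I₂ with hA
  set B := I₂ * I₁ with hB
  have hABap : ∀ x, A (B x) = x := by
    intro x
    have e : A (B x) = I₁ (I₂ (I₂ (I₁ x))) := rfl
    rw [e, hI2sq, map_neg, hI1sq, neg_neg]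
  have hBAap : ∀ x, B (A x) = x := by
    intro x
    have e : B (A x) = I₂ (I₁ (I₁ (I₂ x))) := rfl
    rw [e, hI1sq, map_neg, hI2sq, neg_neg]
  have hsum : ∀ x, A x + B x = (2 * p) • x := by
    intro x
    have := LinearMap.ext_iff.mp hac x
    simpa [Module.End.mul_apply] using this
  have hAap : ∀ x, A x = I₁ (I₂ x) := fun x => rfl
  have hBap : ∀ x, B x = I₂ (I₁ x) := fun x => rfl
  have pAA : pair (A v) (A w) = pair v w := by
    rw [hAap, hAap, hcomp1, hcomp2]
  have pBB : pair (B v) (B w) = pair v w := by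
    rw [hBap, hBap, hcomp2, hcomp1]
  have pAB : pair (A v) (B w) = pair v (B (B w)) := by
    rw [hAap v, hadj1, hadj2, ← hBap (B w), neg_neg]
  have pBA : pair (B v) (A w) = pair v (A (A w)) := by
    rw [hBap v, hadj2, hadj1, ← hAap (A w), neg_neg]
  have hBB : B (B w) = (2 * p) • (B w) - w := by
    have h := hsum (B w)
    rw [hABap] at h
    rw [eq_sub_iff_add_eq, add_comm]
    exact h
  have hAA : A (A w) = (2 * p) • (A w) - w := by
    have h := hsum (A w)
    rw [hBAap] at h
    rw [eq_sub_iff_add_eq]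
    exact h
  have hsumvw : pair v (A w) + pair v (B w) = 2 * p * pair v w := by
    rw [← padd_r, hsum, psmul_r]
  have key : pair ((A - B) v) ((A - B) w) = (4 - 4 * p ^ 2) * pair v w := by
    have e1 : (A - B) v = A v - B v := rfl
    have e2 : (A - B) w = A w - B w := rfl
    rw [e1, e2]
    have : pair (A v - B v) (A w - B w)
        = pair (A v) (A w) - pair (A v) (B w) - pair (B v) (A w) + pair (B v) (B w) := by
      simp [hpair]; ring
    rw [this, pAA, pBB, pAB, pBA, hBB, hAA, psub_r, psub_r, psmul_r, psmul_r]
    linear_combination (-2*p) * hsumvw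
  have hp2 : 0 < 1 - p ^ 2 := by
    have h' := abs_lt.mp hp
    nlinarith [h'.1, h'.2]
  have hsq : Real.sqrt (1 - p ^ 2) ^ 2 = 1 - p ^ 2 := Real.sq_sqrt hp2.le
  have hsne : Real.sqrt (1 - p ^ 2) ≠ 0 := by positivity
  have hKv : K v = (1 / (2 * Real.sqrt (1 - p ^ 2))) • ((A - B) v) := by
    rw [hK]; exact LinearMap.smul_apply _ _ _
  have hKw : K w = (1 / (2 * Real.sqrt (1 - p ^ 2))) • ((A - B) w) := by
    rw [hK]; exact LinearMap.smul_apply _ _ _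
  rw [hKv, hKw, psmul_l, psmul_r, key]
  field_simp
  linear_combination (-4 * pair v w) * hsq
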